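/- arXiv:2405.11670 — 5 statements merged into one kernel-verified Lean document; each statement's English description precedes it below -/
import Mathlib

section
/- In a multiplicative lattice L with 1 compact, an element x is a z-element if and only if x equals the meet of all maximal elements above x, i.e., x = ⋀{m maximal : x ≤ m}. -/
/-- A multiplicative lattice: a complete lattice with an associative, commutative
multiplication distributing over arbitrary joins, with the top element as unit. -/
class MultiplicativeLattice (L : Type*) extends CompleteLattice L, CommMonoid L where
  mul_sSup : ∀ (a : L) (s : Set L), a * sSup s = ⨆ b ∈ s, a * b
  one_eq_top : (1 : L) = ⊤

variable {L : Type*} [MultiplicativeLattice L]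

/-- A maximal element: proper, and anything properly above it up to (but not) ⊤ equals it. -/
def IsMaxElt (m : L) : Prop := m ≠ ⊤ ∧ ∀ x : L, m ≤ x → x ≠ ⊤ → m = x

/-- The set of maximal elements above `a`. -/
def MSet (a : L) : Set L := {m | IsMaxElt m ∧ a ≤ m}

/-- A z-element: `M_a ⊇ M_b` and `b ≤ x` imply `a ≤ x`. -/
def IsZ (x : L) : Prop := ∀ a b : L, MSet b ⊆ MSet a → b ≤ x → a ≤ x

/-- The top element 1 = ⊤ is compact. -/
def OneCompact (L : Type*) [MultiplicativeLattice L] : Prop :=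
  ∀ s : Set L, sSup s = ⊤ → ∃ t : Finset L, ↑t ⊆ s ∧ t.sup id = ⊤

/-- The z-closure of an element: meet of all z-elements above it. -/
noncomputable def zCl (a : L) : L := sInf {z : L | IsZ z ∧ a ≤ z}

theorem stmt6 (h : OneCompact L) (x : L) : IsZ x ↔ x = sInf (MSet x) := by
  constructor
  · intro hz
    have hle : x ≤ sInf (MSet x) := le_sInf fun m hm => hm.2
    refine le_antisymm hle ?_
    refine hz (sInf (MSet x)) x ?_ le_rfl
    intro m hm
    exact ⟨hm.1, sInf_le hm⟩
  · intro hx a b hsub hbx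
    have : a ≤ sInf (MSet x) :=
      le_sInf fun m hm => (hsub ⟨hm.1, le_trans hbx hm.2⟩).2
    rw [hx]
    exact this
end

section
/- The Jacobson radical j_L = ⋀{m : m maximal} of a multiplicative lattice with 1 compact is a z-element; in particular, if j_L = 0, then 0 is a z-element. -/
variable {L : Type*} [MultiplicativeLattice L]

theorem stmt8 (h : OneCompact L) :
    IsZ (sInf {m : L | IsMaxElt m}) ∧
      (sInf {m : L | IsMaxElt m} = ⊥ → IsZ (⊥ : L)) := by
  have hz : IsZ (sInf {m : L | IsMaxElt m}) := by
    intro a b hsub hb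
    refine le_sInf fun m hm => ?_
    exact (hsub ⟨hm, hb.trans (sInf_le hm)⟩).2
  exact ⟨hz, fun h0 => h0 ▸ hz⟩
end

section
/- In a multiplicative lattice L with 1 compact, if a is a z-element and b is any element, then the residual (a : b) = ⋁{l ∈ L : lb ≤ a} is a z-element. -/
variable {L : Type*} [MultiplicativeLattice L]

lemma ml_mul_sup (a x y : L) : a * (x ⊔ y) = a * x ⊔ a * y := by
  rw [← sSup_pair, MultiplicativeLattice.mul_sSup, iSup_pair]

lemma ml_mul_le_mul_left (a : L) {x y : L} (h : x ≤ y) : a * x ≤ a * y := by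
  have : a * (x ⊔ y) = a * x ⊔ a * y := ml_mul_sup a x y
  rw [sup_eq_right.mpr h] at this
  rw [this]; exact le_sup_left

lemma ml_mul_le_left (a b : L) : a * b ≤ a := by
  have := ml_mul_le_mul_left a (le_top : b ≤ ⊤)
  rwa [← MultiplicativeLattice.one_eq_top, mul_one] at this

lemma ml_mul_le_right (a b : L) : a * b ≤ b := by
  rw [mul_comm]; exact ml_mul_le_left b a

lemma max_prime {m x y : L} (hm : IsMaxElt m) (hxy : x * y ≤ m) : x ≤ m ∨ y ≤ m := by
  by_contra hc
  push_neg at hc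
  obtain ⟨hx, hy⟩ := hc
  have hmx : m ⊔ x = ⊤ := by
    by_contra hne
    exact hx ((hm.2 (m ⊔ x) le_sup_left hne) ▸ le_sup_right)
  have hmy : m ⊔ y = ⊤ := by
    by_contra hne
    exact hy ((hm.2 (m ⊔ y) le_sup_left hne) ▸ le_sup_right)
  have htop : (⊤ : L) = (m ⊔ x) * (m ⊔ y) := by rw [hmx, hmy, ← MultiplicativeLattice.one_eq_top, mul_one]
  have hle : (m ⊔ x) * (m ⊔ y) ≤ m := by
    rw [ml_mul_sup]
    refine sup_le (ml_mul_le_right _ m) ?_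
    rw [mul_comm, ml_mul_sup]
    exact sup_le (ml_mul_le_right y m) (mul_comm x y ▸ hxy)
  exact hm.1 (top_le_iff.mp (htop ▸ hle))

lemma mset_mul {c d : L} (b : L) (h : MSet d ⊆ MSet c) : MSet (d * b) ⊆ MSet (c * b) := by
  rintro m ⟨hm, hdb⟩
  rcases max_prime hm hdb with hd | hb
  · have : c ≤ m := (h ⟨hm, hd⟩).2
    exact ⟨hm, le_trans (ml_mul_le_left c b) this⟩
  · exact ⟨hm, le_trans (ml_mul_le_right c b) hb⟩

theorem stmt9 (h : OneCompact L) (a : L) (ha : IsZ a) (b : L) :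
    IsZ (sSup {l : L | l * b ≤ a}) := by
  intro c d hsub hd
  set r := sSup {l : L | l * b ≤ a} with hr
  have hrb : r * b ≤ a := by
    rw [mul_comm, MultiplicativeLattice.mul_sSup]
    exact iSup_le fun l => iSup_le fun hl => by rw [mul_comm]; exact hl
  have hdb : d * b ≤ a := by
    rw [mul_comm]
    exact le_trans (ml_mul_le_mul_left b hd) (mul_comm b r ▸ hrb)
  have hcb : c * b ≤ a := ha (c * b) (d * b) (mset_mul b hsub) hdb
  exact le_sSup hcb
end

section
/- If L is a semisimple multiplicative lattice with 1 compact (i.e., the meet of all maximal elements is 0), then for any b ∈ L the annihilator a(b) = ⋁{l : lb = 0} is a z-element. -/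
variable {L : Type*} [MultiplicativeLattice L]

lemma ml_mul_mono {x y : L} (a : L) (h : x ≤ y) : a * x ≤ a * y := by
  have : a * (x ⊔ y) = a * x ⊔ a * y := ml_mul_sup a x y
  rw [sup_eq_right.mpr h] at this
  rw [this]; exact le_sup_left

lemma ml_mul_top (a : L) : a * ⊤ = a := by
  rw [← MultiplicativeLattice.one_eq_top, mul_one]

theorem stmt10 (h : OneCompact L) (hss : sInf {m : L | IsMaxElt m} = ⊥) (b : L) :
    IsZ (sSup {l : L | l * b = ⊥}) := by
  set A : L := sSup {l : L | l * b = ⊥} with hA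
  have hAb : A * b = ⊥ := by
    rw [mul_comm, hA, MultiplicativeLattice.mul_sSup]
    apply le_antisymm _ bot_le
    apply iSup_le; intro l; apply iSup_le; intro hl
    rw [mul_comm]; exact le_of_eq hl
  intro a c hsub hc
  -- show a * b = ⊥, then a ≤ A
  have key : a * b = ⊥ := by
    apply le_antisymm _ bot_le
    rw [← hss]
    apply le_sInf
    intro m hm
    by_cases hbm : b ≤ m
    · calc a * b ≤ ⊤ * b := by rw [mul_comm, mul_comm ⊤ b]; exact ml_mul_mono b le_top
        _ = b := by rw [mul_comm, ml_mul_top]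
        _ ≤ m := hbm
    · -- m ⊔ b = ⊤, and c * b ≤ ⊥ ≤ m, so c ≤ m
      have htop : m ⊔ b = ⊤ := by
        by_contra hne
        exact hbm (le_sup_right.trans (le_of_eq (hm.2 _ le_sup_left hne).symm))
      have hcb : c * b ≤ m := by
        have : c * b ≤ A * b := by rw [mul_comm, mul_comm A b]; exact ml_mul_mono b hc
        rw [hAb] at this; exact le_trans this bot_le
      have hcm : c ≤ m := by
        have := ml_mul_sup c m b
        rw [htop, ml_mul_top] at this
        rw [this]
        apply sup_le _ hcb
        calc c * m ≤ ⊤ * m := by rw [mul_comm, mul_comm ⊤ m]; exact ml_mul_mono m le_top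
          _ = m := by rw [mul_comm, ml_mul_top]
      have ham : a ≤ m := (hsub ⟨hm, hcm⟩).2
      calc a * b ≤ a * ⊤ := ml_mul_mono a le_top
        _ = a := ml_mul_top a
        _ ≤ m := ham
  exact le_sSup key
end

section
/- Let L be a multiplicative lattice with 1 compact in which every z-element is z-strongly irreducible. Then the set of z-elements of L is totally ordered by ≤. -/
variable {L : Type*} [MultiplicativeLattice L]

theorem stmt19 (h : OneCompact L)
    (hsi : ∀ s : L, IsZ s → ∀ a b : L, IsZ a → IsZ b → a ⊓ b ≤ s → a ≤ s ∨ b ≤ s) :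
    ∀ a b : L, IsZ a → IsZ b → a ≤ b ∨ b ≤ a := by
  intro a b ha hb
  have hab : IsZ (a ⊓ b) := fun c d hcd hd =>
    le_inf (ha c d hcd (hd.trans inf_le_left)) (hb c d hcd (hd.trans inf_le_right))
  rcases hsi (a ⊓ b) hab a b ha hb le_rfl with h1 | h1
  · exact Or.inl (h1.trans inf_le_right)
  · exact Or.inr (h1.trans inf_le_left)
end
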